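/- For a permutation π, one pass of bubble-sort yields the identity (B(π) = id) if and only if π avoids both classical patterns 231 and 321. -/

import Mathlib

/-- Pop from the stack (top first) all letters smaller than `x`;
returns (popped output, remaining stack). -/
def stackPop (x : ℕ) : List ℕ → List ℕ × List ℕ
  | [] => ([], [])
  | t :: ts =>
    if t < x then
      let p := stackPop x ts
      (t :: p.1, p.2)
    else ([], t :: ts)

/-- Run the stack-sorting procedure with the given stack and input;
at the end the (increasing) stack is flushed to the output. -/
def stackRun : List ℕ → List ℕ → List ℕ
  | stack, [] => stack
  | stack, x :: xs =>
    let p := stackPop x stack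
    p.1 ++ stackRun (x :: p.2) xs

/-- The stack-sort operator: one pass of a permutation (word) through a stack. -/
def S (w : List ℕ) : List ℕ := stackRun [] w

/-- `w` is (the one-line notation of) a permutation of `{1, …, n}`. -/
def IsPermOf (w : List ℕ) (n : ℕ) : Prop := w.Perm (List.range' 1 n)

/-- The identity permutation `1 2 ⋯ n` in one-line notation. -/
def idPerm (n : ℕ) : List ℕ := List.range' 1 n

/-- One pass of bubble-sort: iterate left to right, swapping adjacent
entries whenever the left one is larger. -/
def B : List ℕ → List ℕ
  | [] => []
  | [x] => [x]
  | x :: y :: rest => if x ≤ y then x :: B (y :: rest) else y :: B (x :: rest)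

/-- `w` contains the classical pattern 231. -/
def Contains231 (w : List ℕ) : Prop :=
  ∃ i j k : Fin w.length, i < j ∧ j < k ∧ w.get k < w.get i ∧ w.get i < w.get j

/-- `w` contains the classical pattern 321. -/
def Contains321 (w : List ℕ) : Prop :=
  ∃ i j k : Fin w.length, i < j ∧ j < k ∧ w.get j < w.get i ∧ w.get k < w.get j


/-! ### Auxiliary development -/

/-- `Bad w`: some entry has two larger entries before it (as a sublist pattern). -/
def Bad (w : List ℕ) : Prop := ∃ a b c : ℕ, c < a ∧ c < b ∧ List.Sublist [a, b, c] w

theorem B_perm : ∀ w : List ℕ, (B w).Perm w := by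
  intro w
  induction w using B.induct with
  | case1 => simp [B]
  | case2 x => simp [B]
  | case3 x y rest h ih => simpa [B, h] using ih.cons x
  | case4 x y rest h ih =>
      simp only [B, if_neg h]
      exact (ih.cons y).trans (List.Perm.swap x y rest)

theorem bad_cons_le {x y : ℕ} {rest : List ℕ} (hxy : x ≤ y) :
    Bad (x :: y :: rest) ↔ (∃ b ∈ y :: rest, b < x) ∨ Bad (y :: rest) := by
  constructor
  · rintro ⟨a, b, c, hca, hcb, hs⟩
    cases hs with
    | cons _ hs' => exact Or.inr ⟨a, b, c, hca, hcb, hs'⟩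
    | cons_cons _ hs' => exact Or.inl ⟨c, hs'.subset (by simp), hca⟩
  · rintro (⟨b, hb, hbx⟩ | ⟨a, b, c, hca, hcb, hs⟩)
    · rcases List.mem_cons.1 hb with rfl | hb'
      · exact absurd hbx (not_lt.2 hxy)
      · exact ⟨x, y, b, hbx, lt_of_lt_of_le hbx hxy,
          List.Sublist.cons₂ x (List.Sublist.cons₂ y (List.singleton_sublist.2 hb'))⟩
    · exact ⟨a, b, c, hca, hcb, List.Sublist.cons x hs⟩

theorem bad_cons_gt {x y : ℕ} {rest : List ℕ} (hyx : y < x) :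
    Bad (x :: y :: rest) ↔ (∃ b ∈ x :: rest, b < y) ∨ Bad (x :: rest) := by
  constructor
  · rintro ⟨a, b, c, hca, hcb, hs⟩
    cases hs with
    | cons _ hs' =>
      cases hs' with
      | cons _ hs'' => exact Or.inr ⟨a, b, c, hca, hcb, List.Sublist.cons x hs''⟩
      | cons_cons _ hs'' =>
          exact Or.inl ⟨c, List.mem_cons.2 (Or.inr (hs''.subset (by simp))), hca⟩
    | cons_cons _ hs' =>
      cases hs' with
      | cons _ hs'' => exact Or.inr ⟨x, b, c, hca, hcb, List.Sublist.cons₂ x hs''⟩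
      | cons_cons _ hs'' =>
          exact Or.inl ⟨c, List.mem_cons.2 (Or.inr (hs''.subset (by simp))), hcb⟩
  · rintro (⟨b, hb, hby⟩ | ⟨a, b, c, hca, hcb, hs⟩)
    · rcases List.mem_cons.1 hb with rfl | hb'
      · exact absurd hby (not_lt.2 hyx.le)
      · exact ⟨x, y, b, lt_trans hby hyx, hby,
          List.Sublist.cons₂ x (List.Sublist.cons₂ y (List.singleton_sublist.2 hb'))⟩
    · refine ⟨a, b, c, hca, hcb, hs.trans ?_⟩
      exact List.Sublist.cons₂ x (List.Sublist.cons y (List.Sublist.refl rest))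

theorem sorted_B_iff : ∀ w : List ℕ, (B w).Pairwise (· ≤ ·) ↔ ¬ Bad w := by
  intro w
  induction w using B.induct with
  | case1 => simp [B, Bad]
  | case2 x =>
      simp only [B, Bad]
      constructor
      · rintro - ⟨a, b, c, hca, hcb, hs⟩
        have := hs.length_le
        simp at this
      · intro _; simp
  | case3 x y rest h ih =>
      simp only [B, if_pos h, List.pairwise_cons, ih, bad_cons_le h, not_or, not_exists]
      have hm : ∀ b : ℕ, b ∈ B (y :: rest) ↔ b ∈ y :: rest := fun b =>
        (B_perm (y :: rest)).mem_iff
      constructor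
      · rintro ⟨h1, h2⟩
        exact ⟨fun b hb => absurd hb.2 (not_lt.2 (h1 b ((hm b).2 hb.1))), h2⟩
      · rintro ⟨h1, h2⟩
        refine ⟨fun b hb => ?_, h2⟩
        exact not_lt.1 fun hc => h1 b ⟨(hm b).1 hb, hc⟩
  | case4 x y rest h ih =>
      have hyx : y < x := not_le.1 h
      simp only [B, if_neg h, List.pairwise_cons, ih, bad_cons_gt hyx, not_or, not_exists]
      have hm : ∀ b : ℕ, b ∈ B (x :: rest) ↔ b ∈ x :: rest := fun b =>
        (B_perm (x :: rest)).mem_iff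
      constructor
      · rintro ⟨h1, h2⟩
        exact ⟨fun b hb => absurd hb.2 (not_lt.2 (h1 b ((hm b).2 hb.1))), h2⟩
      · rintro ⟨h1, h2⟩
        refine ⟨fun b hb => ?_, h2⟩
        exact not_lt.1 fun hc => h1 b ⟨(hm b).1 hb, hc⟩

theorem pair_sub : ∀ (l : List ℕ) (i j : ℕ) (hij : i < j) (hj : j < l.length),
    List.Sublist [l.get ⟨i, Nat.lt_trans hij hj⟩, l.get ⟨j, hj⟩] l := by
  intro l
  induction l with
  | nil => intro i j hij hj; simp at hj
  | cons x t ih =>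
    intro i j hij hj
    match i, j with
    | 0, j + 1 =>
        simpa using List.Sublist.cons₂ x (List.singleton_sublist.2 (t.get_mem _))
    | i + 1, j + 1 =>
        simpa using List.Sublist.cons x (ih i j (by omega) (by simpa using hj))

theorem triple_sub : ∀ (l : List ℕ) (i j k : ℕ) (hij : i < j) (hjk : j < k)
    (hk : k < l.length),
    List.Sublist [l.get ⟨i, Nat.lt_trans hij (Nat.lt_trans hjk hk)⟩,
      l.get ⟨j, Nat.lt_trans hjk hk⟩, l.get ⟨k, hk⟩] l := by
  intro l
  induction l with
  | nil => intro i j k hij hjk hk; simp at hk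
  | cons x t ih =>
    intro i j k hij hjk hk
    match i, j, k with
    | 0, j + 1, k + 1 =>
        simpa using List.Sublist.cons₂ x (pair_sub t j k (by omega) (by simpa using hk))
    | i + 1, j + 1, k + 1 =>
        simpa using List.Sublist.cons x (ih i j k (by omega) (by omega) (by simpa using hk))

theorem bad_iff_contains {w : List ℕ} (hnd : w.Nodup) :
    Bad w ↔ Contains231 w ∨ Contains321 w := by
  constructor
  · rintro ⟨a, b, c, hca, hcb, hs⟩
    obtain ⟨f, hf⟩ := List.sublist_iff_exists_fin_orderEmbedding_get_eq.1 hs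
    have h01 : (⟨0, by simp⟩ : Fin ([a, b, c].length)) < ⟨1, by simp⟩ := by
      simp [Fin.mk_lt_mk]
    have h12 : (⟨1, by simp⟩ : Fin ([a, b, c].length)) < ⟨2, by simp⟩ := by
      simp [Fin.mk_lt_mk]
    set i := f ⟨0, by simp⟩
    set j := f ⟨1, by simp⟩
    set k := f ⟨2, by simp⟩
    have hij : i < j := f.strictMono h01
    have hjk : j < k := f.strictMono h12
    have ha : w.get i = a := (hf ⟨0, by simp⟩).symm
    have hb : w.get j = b := (hf ⟨1, by simp⟩).symm
    have hc : w.get k = c := (hf ⟨2, by simp⟩).symm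
    have hab : a ≠ b := by
      intro hab
      have : i = j := List.nodup_iff_injective_get.1 hnd (by rw [ha, hb, hab])
      exact absurd this (ne_of_lt hij)
    rcases lt_or_gt_of_ne hab with hlt | hgt
    · exact Or.inl ⟨i, j, k, hij, hjk, by omega, by omega⟩
    · exact Or.inr ⟨i, j, k, hij, hjk, by omega, by omega⟩
  · rintro (⟨i, j, k, hij, hjk, h1, h2⟩ | ⟨i, j, k, hij, hjk, h1, h2⟩)
    · refine ⟨w.get i, w.get j, w.get k, h1, by omega, ?_⟩
      have := triple_sub w i.val j.val k.val hij hjk k.isLt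
      simpa using this
    · refine ⟨w.get i, w.get j, w.get k, by omega, h2, ?_⟩
      have := triple_sub w i.val j.val k.val hij hjk k.isLt
      simpa using this

theorem sorted_idPerm (n : ℕ) : (idPerm n).Pairwise (· ≤ ·) := by
  unfold idPerm
  exact (List.pairwise_lt_range' (s := 1) (n := n) 1 (by omega)).imp le_of_lt

/-- one pass of bubble-sort sorts `π` iff `π` avoids 231 and 321. -/
theorem bubbleSortable_iff (n : ℕ) (w : List ℕ) (hw : IsPermOf w n) :
    B w = idPerm n ↔ ¬ Contains231 w ∧ ¬ Contains321 w := by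
  have hperm : (B w).Perm (idPerm n) := (B_perm w).trans hw
  have hnd : w.Nodup := hw.nodup_iff.2 (List.nodup_range' 1)
  have key : B w = idPerm n ↔ (B w).Pairwise (· ≤ ·) := by
    constructor
    · intro h; rw [h]; exact sorted_idPerm n
    · intro h; exact List.Perm.eq_of_pairwise' h (sorted_idPerm n) hperm
  rw [key, sorted_B_iff, bad_iff_contains hnd]
  tauto
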